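/- Let A be a supercommutative ring and v an odd derivation of A with v² = 0. If there exist elements a₁,…,aₙ, b₁,…,bₙ in A (with aᵢ and bᵢ of opposite parity) such that Σᵢ aᵢ v(bᵢ) = 1, then there exists an odd element θ ∈ A with v(θ) invertible. -/
import Mathlib


/-- A supercommutative ring: a ring `A` with a `ℤ/2`-grading `A = ev ⊕ odd`
such that even elements are central, odd elements anticommute and square to zero. -/
class SuperGrading (A : Type*) [Ring A] where
  ev : AddSubgroup A
  odd : AddSubgroup A
  one_mem_ev : (1 : A) ∈ ev
  decomp : ∀ a : A, ∃ a₀ ∈ ev, ∃ a₁ ∈ odd, a = a₀ + a₁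
  decomp_unique : ∀ a₀ ∈ ev, ∀ a₁ ∈ odd, a₀ + a₁ = 0 → a₀ = 0 ∧ a₁ = 0
  mul_ev_ev : ∀ a ∈ ev, ∀ b ∈ ev, a * b ∈ ev
  mul_ev_odd : ∀ a ∈ ev, ∀ b ∈ odd, a * b ∈ odd
  mul_odd_ev : ∀ a ∈ odd, ∀ b ∈ ev, a * b ∈ odd
  mul_odd_odd : ∀ a ∈ odd, ∀ b ∈ odd, a * b ∈ ev
  comm_ev_ev : ∀ a ∈ ev, ∀ b ∈ ev, a * b = b * a
  comm_ev_odd : ∀ a ∈ ev, ∀ b ∈ odd, a * b = b * a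
  anticomm_odd : ∀ a ∈ odd, ∀ b ∈ odd, a * b = -(b * a)
  odd_sq : ∀ a ∈ odd, a * a = 0

open SuperGrading

/-- An odd derivation of a supercommutative ring, with square zero. -/
structure OddDer (A : Type*) [Ring A] [SuperGrading A] where
  v : A → A
  map_add : ∀ a b : A, v (a + b) = v a + v b
  map_ev : ∀ a ∈ ev (A := A), v a ∈ odd (A := A)
  map_odd : ∀ a ∈ odd (A := A), v a ∈ ev (A := A)
  leib_ev : ∀ a ∈ ev (A := A), ∀ b : A, v (a * b) = v a * b + a * v b
  leib_odd : ∀ a ∈ odd (A := A), ∀ b : A, v (a * b) = v a * b - a * v b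
  sq_zero : ∀ a : A, v (v a) = 0

/-- if `∑ aᵢ v(bᵢ) = 1` with `aᵢ, bᵢ` of opposite parity, then there is
an odd `θ` with `v θ` invertible. -/
theorem stmt2 {A : Type*} [Ring A] [SuperGrading A] (D : OddDer A)
    (n : ℕ) (a b : Fin n → A)
    (hab : ∀ i, (a i ∈ ev (A := A) ∧ b i ∈ odd (A := A)) ∨
                  (a i ∈ odd (A := A) ∧ b i ∈ ev (A := A)))
    (hsum : ∑ i, a i * D.v (b i) = 1) :
    ∃ θ ∈ odd (A := A), IsUnit (D.v θ) := by
  classical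
  -- v 0 = 0
  have hv0 : D.v 0 = 0 := by
    have h := D.map_add 0 0
    rw [add_zero] at h
    have h2 : D.v 0 + 0 = D.v 0 + D.v 0 := by rw [add_zero]; exact h
    exact (add_left_cancel h2).symm
  -- v as an additive monoid hom
  let V : A →+ A := { toFun := D.v, map_zero' := hv0, map_add' := D.map_add }
  have hV : ∀ x, V x = D.v x := fun _ => rfl
  -- for each i, produce an odd θᵢ with v θᵢ = aᵢ v(bᵢ) + pᵢ * qᵢ, pᵢ qᵢ odd
  have key : ∀ i : Fin n, ∃ t p q : A, t ∈ odd (A := A) ∧ p ∈ odd (A := A) ∧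
      q ∈ odd (A := A) ∧ D.v t = a i * D.v (b i) + p * q := by
    intro i
    rcases hab i with ⟨ha, hb⟩ | ⟨ha, hb⟩
    · refine ⟨a i * b i, D.v (a i), b i, mul_ev_odd _ ha _ hb, D.map_ev _ ha, hb, ?_⟩
      rw [D.leib_ev _ ha, add_comm]
    · refine ⟨b i * a i - a i * b i, D.v (b i), a i,
        AddSubgroup.sub_mem _ (mul_ev_odd _ hb _ ha) (mul_odd_ev _ ha _ hb),
        D.map_ev _ hb, ha, ?_⟩
      have h1 : D.v (b i * a i - a i * b i) = D.v (b i * a i) - D.v (a i * b i) := by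
        have := D.map_add (b i * a i - a i * b i) (a i * b i)
        rw [sub_add_cancel] at this
        rw [this]; abel
      rw [h1, D.leib_ev _ hb, D.leib_odd _ ha,
        comm_ev_ev _ hb _ (D.map_odd _ ha)]
      abel
  choose t p q ht hp hq hv using key
  refine ⟨∑ i, t i, AddSubgroup.sum_mem _ fun i _ => ht i, ?_⟩
  have hsum' : D.v (∑ i, t i) = 1 + ∑ i, p i * q i := by
    rw [← hV, map_sum]
    simp only [hV, hv]
    rw [Finset.sum_add_distrib, hsum]
  rw [hsum']
  refine IsNilpotent.isUnit_one_add ?_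
  refine Commute.isNilpotent_sum (fun i _ => ?_) (fun i j _ _ => ?_)
  · -- (p i * q i)^2 = 0
    refine ⟨2, ?_⟩
    have hqp : q i * p i = -(p i * q i) := anticomm_odd _ (hq i) _ (hp i)
    have h2 : (p i * q i) * (p i * q i) = p i * (q i * p i) * q i := by noncomm_ring
    rw [pow_two, h2, hqp]
    have hpp : p i * p i = 0 := odd_sq _ (hp i)
    have : p i * -(p i * q i) * q i = -((p i * p i) * (q i * q i)) := by noncomm_ring
    rw [this, hpp, zero_mul, neg_zero]
  · exact comm_ev_ev _ (mul_odd_odd _ (hp i) _ (hq i)) _ (mul_odd_odd _ (hp j) _ (hq j))
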